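/- The McKinnon function f_m(x,y) = 2400|x|³ + y + y² for x ≤ 0 and 6x³ + y + y² for x ≥ 0 is twice continuously differentiable on ℝ², strictly convex, its Hessian is positive definite at every point with x ≠ 0, and its Hessian at points with x = 0 is positive semidefinite and singular. -/

import Mathlib

open Set


/-- The McKinnon function `f_m(x,y) = 2400|x|³ + y + y²` for `x ≤ 0`,
`6x³ + y + y²` for `x ≥ 0`. -/
noncomputable def mckinnon (p : ℝ × ℝ) : ℝ :=
  (if p.1 ≤ 0 then 2400 * |p.1| ^ 3 else 6 * p.1 ^ 3) + p.2 + p.2 ^ 2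

/-- The second derivative (Hessian bilinear form) of a function at a point. -/
noncomputable def hess (f : ℝ × ℝ → ℝ) (p v w : ℝ × ℝ) : ℝ :=
  fderiv ℝ (fun q => fderiv ℝ f q v) p w

noncomputable def q2 (x : ℝ) : ℝ := 7218 * (|x| - x) + 36 * x
noncomputable def q1 (x : ℝ) : ℝ := x * q2 x / 2
noncomputable def q0 (x : ℝ) : ℝ := x ^ 2 * q2 x / 6

lemma q2_nonpos {x : ℝ} (h : x ≤ 0) : q2 x = -14400 * x := by
  simp [q2, abs_of_nonpos h]; ring

lemma q2_nonneg' {x : ℝ} (h : 0 ≤ x) : q2 x = 36 * x := by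
  simp [q2, abs_of_nonneg h]

lemma q2_cont : Continuous q2 := by unfold q2; fun_prop

lemma key {h : ℝ → ℝ} (hc : ContinuousAt h 0) : HasDerivAt (fun x => x * h x) (h 0) 0 := by
  rw [hasDerivAt_iff_tendsto_slope]
  have : ∀ x ∈ ({(0:ℝ)}ᶜ : Set ℝ), h x = slope (fun x => x * h x) 0 x := by
    intro x hx
    have hx0 : x ≠ 0 := hx
    rw [slope_def_field]
    field_simp
    ring
  exact Filter.Tendsto.congr' (Filter.eventuallyEq_of_mem self_mem_nhdsWithin this)
    ((hc.tendsto).mono_left nhdsWithin_le_nhds)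

lemma q2_zero : q2 0 = 0 := by simp [q2]

lemma q1_eq : q1 = fun y => y * (q2 y / 2) := by
  funext y; simp [q1, mul_div_assoc]

lemma hd2 (x : ℝ) : HasDerivAt q1 (q2 x) x := by
  rcases lt_trichotomy x 0 with hx | hx | hx
  · have hev : ∀ᶠ y in nhds x, q1 y = -7200 * y ^ 2 := by
      filter_upwards [isOpen_Iio.eventually_mem hx] with y (hy : y < 0)
      simp only [q1, q2_nonpos hy.le]; ring
    have h' : HasDerivAt (fun y : ℝ => -7200 * y ^ 2) (q2 x) x := by
      have := (hasDerivAt_pow 2 x).const_mul (-7200 : ℝ)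
      simpa [q2_nonpos hx.le] using this.congr_deriv (by push_cast; ring)
    exact h'.congr_of_eventuallyEq hev
  · subst hx
    have : HasDerivAt (fun y : ℝ => y * (q2 y / 2)) (q2 0 / 2) 0 :=
      key ((q2_cont.div_const 2).continuousAt)
    rw [q1_eq]
    simpa [q2_zero] using this
  · have hev : ∀ᶠ y in nhds x, q1 y = 18 * y ^ 2 := by
      filter_upwards [isOpen_Ioi.eventually_mem hx] with y (hy : 0 < y)
      simp only [q1, q2_nonneg' hy.le]; ring
    have h' : HasDerivAt (fun y : ℝ => 18 * y ^ 2) (q2 x) x := by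
      have := (hasDerivAt_pow 2 x).const_mul (18 : ℝ)
      simpa [q2_nonneg' hx.le] using this.congr_deriv (by push_cast; ring)
    exact h'.congr_of_eventuallyEq hev

lemma q0_eq : q0 = fun y => y * (y * q2 y / 6) := by
  funext y; simp [q0]; ring

lemma hd1 (x : ℝ) : HasDerivAt q0 (q1 x) x := by
  rcases lt_trichotomy x 0 with hx | hx | hx
  · have hev : ∀ᶠ y in nhds x, q0 y = -2400 * y ^ 3 := by
      filter_upwards [isOpen_Iio.eventually_mem hx] with y (hy : y < 0)
      simp only [q0, q2_nonpos hy.le]; ring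
    have h' : HasDerivAt (fun y : ℝ => -2400 * y ^ 3) (q1 x) x := by
      have := (hasDerivAt_pow 3 x).const_mul (-2400 : ℝ)
      simpa [q1, q2_nonpos hx.le] using this.congr_deriv (by push_cast; ring)
    exact h'.congr_of_eventuallyEq hev
  · subst hx
    have : HasDerivAt (fun y : ℝ => y * (y * q2 y / 6)) ((0 : ℝ) * q2 0 / 6) 0 :=
      key (by exact ((continuous_id.mul q2_cont).div_const 6).continuousAt)
    rw [q0_eq]
    simpa [q1, q2_zero] using this
  · have hev : ∀ᶠ y in nhds x, q0 y = 6 * y ^ 3 := by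
      filter_upwards [isOpen_Ioi.eventually_mem hx] with y (hy : 0 < y)
      simp only [q0, q2_nonneg' hy.le]; ring
    have h' : HasDerivAt (fun y : ℝ => 6 * y ^ 3) (q1 x) x := by
      have := (hasDerivAt_pow 3 x).const_mul (6 : ℝ)
      simpa [q1, q2_nonneg' hx.le] using this.congr_deriv (by push_cast; ring)
    exact h'.congr_of_eventuallyEq hev

lemma mckinnon_eq : mckinnon = fun p => q0 p.1 + (p.2 + p.2 ^ 2) := by
  funext p
  rcases le_or_gt p.1 0 with h | h
  · simp only [mckinnon, q0, q2_nonpos h, if_pos h, abs_of_nonpos h]; ring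
  · simp only [mckinnon, q0, q2_nonneg' h.le, if_neg (not_le.2 h)]; ring

lemma deriv_q0 : deriv q0 = q1 := funext fun x => (hd1 x).deriv
lemma deriv_q1 : deriv q1 = q2 := funext fun x => (hd2 x).deriv

lemma q0_contDiff : ContDiff ℝ 2 q0 := by
  rw [show (2 : WithTop ℕ∞) = 1 + 1 from rfl, contDiff_succ_iff_deriv]
  refine ⟨fun x => (hd1 x).differentiableAt, by simp, ?_⟩
  rw [deriv_q0, contDiff_one_iff_deriv, deriv_q1]
  exact ⟨fun x => (hd2 x).differentiableAt, q2_cont⟩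

lemma mckinnon_contDiff : ContDiff ℝ 2 mckinnon := by
  rw [mckinnon_eq]
  exact (q0_contDiff.comp contDiff_fst).add
    (contDiff_snd.add (contDiff_snd.pow 2))

lemma q1_strictMono : StrictMono q1 := by
  intro a b hab
  have ha := q2_nonpos (le_refl (0:ℝ))
  rcases le_or_gt b 0 with hb | hb
  · rw [show q1 a = -7200 * a ^ 2 by simp [q1, q2_nonpos (hab.le.trans hb)]; ring,
      show q1 b = -7200 * b ^ 2 by simp [q1, q2_nonpos hb]; ring]
    nlinarith
  · rcases le_or_gt a 0 with ha' | ha'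
    · have h1 : q1 a ≤ 0 := by
        rw [show q1 a = -7200 * a ^ 2 by simp [q1, q2_nonpos ha']; ring]; nlinarith
      have h2 : 0 < q1 b := by
        rw [show q1 b = 18 * b ^ 2 by simp [q1, q2_nonneg' hb.le]; ring]; nlinarith
      linarith
    · rw [show q1 a = 18 * a ^ 2 by simp [q1, q2_nonneg' ha'.le]; ring,
        show q1 b = 18 * b ^ 2 by simp [q1, q2_nonneg' hb.le]; ring]
      nlinarith

lemma q0_strictConvex : StrictConvexOn ℝ univ q0 := by
  have := StrictMono.strictConvexOn_univ_of_deriv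
    (f := q0) (Differentiable.continuous fun x => (hd1 x).differentiableAt) ?_
  · exact this
  · rw [deriv_q0]; exact q1_strictMono

lemma hy_strictConvex : StrictConvexOn ℝ univ (fun y : ℝ => y + y ^ 2) := by
  have h2 : StrictConvexOn ℝ univ (fun y : ℝ => y ^ 2) :=
    Even.strictConvexOn_pow even_two two_ne_zero
  have h1 : ConvexOn ℝ univ (fun y : ℝ => y) := convexOn_id convex_univ
  exact h1.add_strictConvexOn h2

lemma prod_add_strictConvex {f g : ℝ → ℝ} (hf : StrictConvexOn ℝ univ f)
    (hg : StrictConvexOn ℝ univ g) :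
    StrictConvexOn ℝ univ (fun p : ℝ × ℝ => f p.1 + g p.2) := by
  refine ⟨convex_univ, ?_⟩
  intro p _ q _ hpq a b ha hb hab
  simp only [Prod.smul_fst, Prod.smul_snd, Prod.fst_add, Prod.snd_add, smul_eq_mul]
  by_cases h1 : p.1 = q.1
  · have h2 : p.2 ≠ q.2 := fun h => hpq (Prod.ext h1 h)
    have hG := hg.2 (mem_univ p.2) (mem_univ q.2) h2 ha hb hab
    have hF := hf.convexOn.2 (mem_univ p.1) (mem_univ q.1) ha.le hb.le hab
    simp only [smul_eq_mul] at hG hF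
    linarith
  · have hF := hf.2 (mem_univ p.1) (mem_univ q.1) h1 ha hb hab
    have hG := hg.convexOn.2 (mem_univ p.2) (mem_univ q.2) ha.le hb.le hab
    simp only [smul_eq_mul] at hG hF
    linarith

lemma mck_strictConvex : StrictConvexOn ℝ univ mckinnon := by
  rw [mckinnon_eq]
  exact prod_add_strictConvex q0_strictConvex hy_strictConvex

lemma fderiv_mck (q : ℝ × ℝ) : fderiv ℝ mckinnon q =
    q1 q.1 • ContinuousLinearMap.fst ℝ ℝ ℝ
      + (1 + 2 * q.2) • ContinuousLinearMap.snd ℝ ℝ ℝ := by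
  have A : HasFDerivAt (fun p : ℝ × ℝ => q0 p.1)
      (q1 q.1 • ContinuousLinearMap.fst ℝ ℝ ℝ) q :=
    (hd1 q.1).comp_hasFDerivAt q hasFDerivAt_fst
  have hy : HasDerivAt (fun y : ℝ => y + y ^ 2) (1 + 2 * q.2) q.2 := by
    exact ((hasDerivAt_id' q.2).add (hasDerivAt_pow 2 q.2)).congr_deriv (by norm_num)
  have B : HasFDerivAt (fun p : ℝ × ℝ => p.2 + p.2 ^ 2)
      ((1 + 2 * q.2) • ContinuousLinearMap.snd ℝ ℝ ℝ) q :=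
    hy.comp_hasFDerivAt q hasFDerivAt_snd
  rw [mckinnon_eq]
  exact (A.add B).fderiv

lemma hess_mck (p v w : ℝ × ℝ) :
    hess mckinnon p v w = q2 p.1 * v.1 * w.1 + 2 * v.2 * w.2 := by
  unfold hess
  have h1 : (fun q => fderiv ℝ mckinnon q v)
      = fun q : ℝ × ℝ => q1 q.1 * v.1 + (1 + 2 * q.2) * v.2 := by
    funext q
    rw [fderiv_mck]
    simp [smul_eq_mul]
  rw [h1]
  have A : HasFDerivAt (fun q : ℝ × ℝ => q1 q.1 * v.1)
      ((q2 p.1 * v.1) • ContinuousLinearMap.fst ℝ ℝ ℝ) p :=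
    ((hd2 p.1).mul_const v.1).comp_hasFDerivAt p hasFDerivAt_fst
  have hy : HasDerivAt (fun y : ℝ => (1 + 2 * y) * v.2) (2 * v.2) p.2 := by
    have := (((hasDerivAt_id p.2).const_mul 2).const_add 1).mul_const v.2
    simpa using this
  have B : HasFDerivAt (fun q : ℝ × ℝ => (1 + 2 * q.2) * v.2)
      ((2 * v.2) • ContinuousLinearMap.snd ℝ ℝ ℝ) p :=
    hy.comp_hasFDerivAt p hasFDerivAt_snd
  rw [show (fun q : ℝ × ℝ => q1 q.1 * v.1 + (1 + 2 * q.2) * v.2) = (fun q : ℝ × ℝ => q1 q.1 * v.1) + (fun q : ℝ × ℝ => (1 + 2 * q.2) * v.2) from rfl, (A.add B).fderiv]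
  simp [smul_eq_mul]

lemma q2_pos_of_ne {x : ℝ} (hx : x ≠ 0) : 0 < q2 x := by
  rcases hx.lt_or_gt with h | h
  · rw [q2_nonpos h.le]; nlinarith
  · rw [q2_nonneg' h.le]; nlinarith

/-- The McKinnon function is C², strictly convex, its Hessian is positive definite
at points with `x ≠ 0`, and at points with `x = 0` the Hessian is positive
semidefinite and singular. -/
theorem mckinnon_properties :
    ContDiff ℝ 2 mckinnon ∧
    StrictConvexOn ℝ Set.univ mckinnon ∧
    (∀ p : ℝ × ℝ, p.1 ≠ 0 → ∀ v : ℝ × ℝ, v ≠ 0 → 0 < hess mckinnon p v v) ∧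
    (∀ p : ℝ × ℝ, p.1 = 0 →
      (∀ v : ℝ × ℝ, 0 ≤ hess mckinnon p v v) ∧
      ∃ v : ℝ × ℝ, v ≠ 0 ∧ ∀ w : ℝ × ℝ, hess mckinnon p v w = 0) := by
  refine ⟨mckinnon_contDiff, mck_strictConvex, ?_, ?_⟩
  · intro p hp v hv
    rw [hess_mck]
    have hq := q2_pos_of_ne hp
    have hcase : v.1 ≠ 0 ∨ v.2 ≠ 0 := by
      by_contra h
      push_neg at h
      exact hv (Prod.ext h.1 h.2)
    rcases hcase with h | h
    · nlinarith [mul_self_pos.2 h, sq_nonneg v.2, mul_pos hq (mul_self_pos.2 h)]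
    · nlinarith [mul_self_pos.2 h, sq_nonneg v.1, mul_nonneg hq.le (mul_self_nonneg v.1)]
  · intro p hp
    constructor
    · intro v
      rw [hess_mck, hp, q2_zero]
      nlinarith [sq_nonneg v.2]
    · refine ⟨(1, 0), by simp, fun w => ?_⟩
      rw [hess_mck, hp, q2_zero]
      simp
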